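/- Let h : ℝ → ℝ be smooth, nowhere flat and surjective. Then there exists a piecewise smooth function h♯ : ℝ → ℝ such that h(h♯(x)) = x for all x ∈ ℝ. -/

import Mathlib

open Real Set

/-- A smooth function is nowhere flat if some derivative of order `r' ≤ r` (for a
uniform `r`) is nonzero at every point. -/
def NowhereFlat (g : ℝ → ℝ) : Prop :=
  ∃ r : ℕ, 0 < r ∧ ∀ x : ℝ, ∃ r' : ℕ, 0 < r' ∧ r' ≤ r ∧ iteratedDeriv r' g x ≠ 0

/-- A function `k : ℝ → ℝ` is piecewise smooth if there is a closed, topologically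
discrete set `Y ⊆ ℝ` such that on each connected component of `ℝ \ Y` the function `k`
is smooth and extends continuously to the closure of the component. -/
def PiecewiseSmooth (k : ℝ → ℝ) : Prop :=
  ∃ Y : Set ℝ, IsClosed Y ∧ DiscreteTopology Y ∧
    ∀ x ∈ Yᶜ,
      ContDiffOn ℝ (⊤ : ℕ∞) k (connectedComponentIn Yᶜ x) ∧
      ∃ g : ℝ → ℝ, ContinuousOn g (closure (connectedComponentIn Yᶜ x)) ∧
        EqOn g k (connectedComponentIn Yᶜ x)

open Filter Topology

/-- constant sign on an interval -/
lemma same_sign {f : ℝ → ℝ} (hf : Continuous f) {a b : ℝ} (hne : ∀ x ∈ Ioo a b, f x ≠ 0)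
    {x y : ℝ} (hx : x ∈ Ioo a b) (hy : y ∈ Ioo a b) (hfx : 0 < f x) : 0 < f y := by
  by_contra hy0
  have hy0' : f y < 0 := lt_of_le_of_ne (not_lt.mp hy0) (hne y hy)
  have h0 : (0:ℝ) ∈ uIcc (f y) (f x) := mem_uIcc.mpr (Or.inl ⟨hy0'.le, hfx.le⟩)
  rcases intermediate_value_uIcc hf.continuousOn h0 with ⟨z, hz, hz0⟩
  exact hne z (Set.ordConnected_Ioo.uIcc_subset hy hx hz) hz0

/-- mono or anti from nonvanishing derivative on open interval -/
lemma mono_or_anti {h : ℝ → ℝ} (hsm : ContDiff ℝ (⊤:ℕ∞) h) {p q : ℝ} (hpq : p < q)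
    (hd : ∀ t ∈ Ioo p q, deriv h t ≠ 0) :
    StrictMonoOn h (Icc p q) ∨ StrictAntiOn h (Icc p q) := by
  have hdc : Continuous (deriv h) := hsm.continuous_deriv (by norm_num)
  obtain ⟨x₀, hx₀⟩ := nonempty_Ioo.mpr hpq
  rcases (hd x₀ hx₀).lt_or_gt with hneg | hpos
  · right
    apply strictAntiOn_of_deriv_neg (convex_Icc p q) hsm.continuous.continuousOn
    intro x hx
    rw [interior_Icc] at hx
    by_contra hpos'
    have : 0 < deriv h x := lt_of_le_of_ne (not_lt.mp hpos') (Ne.symm (hd x hx))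
    exact absurd (same_sign hdc hd hx hx₀ this) (not_lt.mpr hneg.le)
  · left
    apply strictMonoOn_of_deriv_pos (convex_Icc p q) hsm.continuous.continuousOn
    intro x hx
    rw [interior_Icc] at hx
    exact same_sign hdc hd hx₀ hx hpos

/-- extraction of a punctured ball -/
lemma punct_ball {w : ℝ} {P : ℝ → Prop} (h : ∀ᶠ x in 𝓝[≠] w, P x) :
    ∃ ε > 0, ∀ x, x ≠ w → |x - w| < ε → P x := by
  rcases Metric.mem_nhdsWithin_iff.mp h with ⟨ε, hε, hsub⟩
  exact ⟨ε, hε, fun x hx hd => hsub ⟨by simpa [Real.dist_eq, Metric.mem_ball] using hd, hx⟩⟩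

lemma punct_ball' {w ε : ℝ} (hε : 0 < ε) {P : ℝ → Prop} (h : ∀ x, x ≠ w → |x - w| < ε → P x) :
    ∀ᶠ x in 𝓝[≠] w, P x := by
  filter_upwards [eventually_nhdsWithin_of_eventually_nhds
    (Metric.eventually_nhds_iff.mpr ⟨ε, hε, fun {y} hy => hy⟩), self_mem_nhdsWithin] with x h1 h2
  exact h x h2 (by simpa [Real.dist_eq] using h1)

/-- key: if some iterated derivative is nonzero, zeros of f are isolated at w -/
lemma key : ∀ (k : ℕ) (f : ℝ → ℝ), ContDiff ℝ (⊤:ℕ∞) f → ∀ (w : ℝ),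
    iteratedDeriv k f w ≠ 0 → ∀ᶠ x in 𝓝[≠] w, f x ≠ 0 := by
  intro k
  induction k with
  | zero =>
    intro f hf w hw
    rw [iteratedDeriv_zero] at hw
    exact eventually_nhdsWithin_of_eventually_nhds ((hf.continuous.continuousAt).eventually_ne hw)
  | succ k ih =>
    intro f hf w hw
    by_cases hfw : f w = 0
    · have hd : iteratedDeriv k (deriv f) w ≠ 0 := by
        rw [← iteratedDeriv_succ']; exact hw
      have hf' : ContDiff ℝ (⊤:ℕ∞) (deriv f) := (contDiff_infty_iff_deriv.mp hf).2
      rcases punct_ball (ih (deriv f) hf' w hd) with ⟨ε, hε, hball⟩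
      apply punct_ball' hε
      intro x hx hxe
      -- f x ≠ 0 since f strictly monotone between w and x
      have hmain : ∀ y, y ≠ w → |y - w| < ε → f y ≠ 0 := by
        intro y hy hye
        rcases hy.lt_or_gt with hlt | hgt
        · -- y < w
          have hmono := mono_or_anti hf (p := y) (q := w) hlt (fun t ht => hball t
            (ne_of_lt ht.2) (by have h2 := abs_sub_lt_iff.mp hye; rw [abs_sub_lt_iff]; constructor <;> linarith [ht.1, ht.2, h2.1, h2.2]))
          have hyI : y ∈ Icc y w := ⟨le_refl y, hlt.le⟩
          have hwI : w ∈ Icc y w := ⟨hlt.le, le_refl w⟩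
          rcases hmono with hm | hm
          · exact fun h0 => absurd (hfw ▸ (hm hyI hwI hlt)) (by rw [h0]; exact lt_irrefl 0)
          · exact fun h0 => absurd (hfw ▸ (hm hyI hwI hlt)) (by rw [h0]; exact lt_irrefl 0)
        · have hmono := mono_or_anti hf (p := w) (q := y) hgt (fun t ht => hball t
            (ne_of_gt ht.1) (by have h2 := abs_sub_lt_iff.mp hye; rw [abs_sub_lt_iff]; constructor <;> linarith [ht.1, ht.2, h2.1, h2.2]))
          have hyI : y ∈ Icc w y := ⟨hgt.le, le_refl y⟩
          have hwI : w ∈ Icc w y := ⟨le_refl w, hgt.le⟩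
          rcases hmono with hm | hm
          · exact fun h0 => absurd (hfw ▸ (hm hwI hyI hgt)) (by rw [h0]; exact lt_irrefl 0)
          · exact fun h0 => absurd (hfw ▸ (hm hwI hyI hgt)) (by rw [h0]; exact lt_irrefl 0)
      exact hmain x hx hxe
    · exact eventually_nhdsWithin_of_eventually_nhds ((hf.continuous.continuousAt).eventually_ne hfw)

section main
variable {h : ℝ → ℝ}

lemma keyD (hsm : ContDiff ℝ (⊤:ℕ∞) h) (hnf : NowhereFlat h) (w : ℝ) :
    ∀ᶠ x in 𝓝[≠] w, deriv h x ≠ 0 := by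
  obtain ⟨r, _, hx⟩ := hnf
  obtain ⟨r', hr'0, _, hne⟩ := hx w
  obtain ⟨m, rfl⟩ : ∃ m, r' = m + 1 := ⟨r' - 1, (Nat.succ_pred_eq_of_pos hr'0).symm⟩
  have : iteratedDeriv m (deriv h) w ≠ 0 := by rw [← iteratedDeriv_succ']; exact hne
  exact key m (deriv h) (contDiff_infty_iff_deriv.mp hsm).2 w this

lemma keyL (hsm : ContDiff ℝ (⊤:ℕ∞) h) (hnf : NowhereFlat h) (w L : ℝ) :
    ∀ᶠ x in 𝓝[≠] w, h x ≠ L := by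
  obtain ⟨r, _, hx⟩ := hnf
  obtain ⟨r', hr'0, _, hne⟩ := hx w
  have hsm' : ContDiff ℝ (⊤:ℕ∞) (fun x => h x - L) := hsm.sub contDiff_const
  have hIt : iteratedDeriv r' (fun x => h x - L) w ≠ 0 := by
    obtain ⟨m, rfl⟩ : ∃ m, r' = m + 1 := ⟨r' - 1, (Nat.succ_pred_eq_of_pos hr'0).symm⟩
    rw [iteratedDeriv_succ']
    have hder : (deriv fun x => h x - L) = deriv h := by
      funext x; exact deriv_sub_const L
    rw [hder, ← iteratedDeriv_succ']
    exact hne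
  have := key r' _ hsm' w hIt
  filter_upwards [this] with x hx
  exact fun hc => hx (by rw [hc, sub_self])

/-- core covering structure -/
def Good (h : ℝ → ℝ) (c d : ℝ) : Prop :=
  c < d ∧ ∃ p q : ℝ, p < q ∧ (∀ t ∈ Ioo p q, deriv h t ≠ 0) ∧ Icc c d ⊆ uIcc (h p) (h q)

lemma good_mono {c c' e : ℝ} (hg : Good h c e) (h1 : c < c') (h2 : c' < e) : Good h c' e := by
  obtain ⟨hce, p, q, hpq, hd, hsub⟩ := hg
  exact ⟨h2, p, q, hpq, hd, fun x hx => hsub ⟨h1.le.trans hx.1, hx.2⟩⟩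

lemma step_up (hsm : ContDiff ℝ (⊤:ℕ∞) h) (hnf : NowhereFlat h)
    (hsurj : Function.Surjective h) (c : ℝ) : ∃ d, Good h c d := by
  obtain ⟨x1, hx1⟩ := hsurj (c + 1)
  have hA : IsClosed (h ⁻¹' {c}) := IsClosed.preimage hsm.continuous isClosed_singleton
  by_cases hne : ((h ⁻¹' {c}) ∩ Iic x1).Nonempty
  · set t := sSup ((h ⁻¹' {c}) ∩ Iic x1) with ht
    have htm : t ∈ (h ⁻¹' {c}) ∩ Iic x1 :=
      (hA.inter isClosed_Iic).csSup_mem hne ⟨x1, fun y hy => hy.2⟩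
    have hht : h t = c := htm.1
    have htx1 : t < x1 := lt_of_le_of_ne htm.2 (fun he => by
      rw [he] at hht; rw [hht] at hx1; linarith)
    have habove : ∀ y ∈ Ioc t x1, h y ≠ c := by
      intro y hy hc
      have : y ≤ t := le_csSup ⟨x1, fun z hz => hz.2⟩ ⟨hc, hy.2⟩
      linarith [hy.1]
    have hpos : ∀ y ∈ Ioc t x1, c < h y := by
      intro y hy
      by_contra hle
      have hlt : h y < c := lt_of_le_of_ne (not_lt.mp hle) (habove y hy)
      have h0 : c ∈ uIcc (h y) (h x1) := mem_uIcc.mpr (Or.inl ⟨hlt.le, by rw [hx1]; linarith⟩)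
      rcases intermediate_value_uIcc hsm.continuous.continuousOn h0 with ⟨z, hz, hzc⟩
      rw [uIcc_of_le hy.2] at hz
      exact habove z ⟨lt_of_lt_of_le hy.1 hz.1, hz.2⟩ hzc
    rcases punct_ball (keyD hsm hnf t) with ⟨ε, hε, hball⟩
    set q0 := min (t + ε/2) ((t + x1)/2) with hq0
    have htq0 : t < q0 := lt_min (by linarith) (by linarith)
    have hq0x1 : q0 ≤ x1 := le_trans (min_le_right _ _) (by linarith)
    have hd0 : ∀ z ∈ Ioo t q0, deriv h z ≠ 0 := by
      intro z hz
      refine hball z (ne_of_gt hz.1) ?_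
      have : z < t + ε/2 := lt_of_lt_of_le hz.2 (min_le_left _ _)
      rw [abs_sub_lt_iff]; constructor <;> linarith [hz.1]
    have hq0pos : c < h q0 := hpos q0 ⟨htq0, hq0x1⟩
    refine ⟨h q0, hq0pos, t, q0, htq0, hd0, ?_⟩
    rw [hht, uIcc_of_le hq0pos.le]
  · have hAne : (h ⁻¹' {c}).Nonempty := hsurj c
    have hbdd : BddBelow (h ⁻¹' {c}) := ⟨x1, fun y hy => by
      by_contra hlt
      exact hne ⟨y, hy, (not_le.mp hlt).le⟩⟩
    set t := sInf (h ⁻¹' {c}) with ht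
    have htm : t ∈ h ⁻¹' {c} := hA.csInf_mem hAne hbdd
    have hht : h t = c := htm
    have hx1t : x1 < t := by
      rcases lt_or_ge x1 t with hlt | hge
      · exact hlt
      · exact absurd ⟨t, htm, hge⟩ hne
    have hbelow : ∀ y ∈ Ico x1 t, h y ≠ c := by
      intro y hy hc
      have : t ≤ y := csInf_le hbdd hc
      linarith [hy.2]
    have hpos : ∀ y ∈ Ico x1 t, c < h y := by
      intro y hy
      by_contra hle
      have hlt : h y < c := lt_of_le_of_ne (not_lt.mp hle) (hbelow y hy)
      have h0 : c ∈ uIcc (h x1) (h y) := mem_uIcc.mpr (Or.inr ⟨hlt.le, by rw [hx1]; linarith⟩)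
      rcases intermediate_value_uIcc hsm.continuous.continuousOn h0 with ⟨z, hz, hzc⟩
      rw [uIcc_of_le hy.1] at hz
      exact hbelow z ⟨hz.1, lt_of_le_of_lt hz.2 hy.2⟩ hzc
    rcases punct_ball (keyD hsm hnf t) with ⟨ε, hε, hball⟩
    set p0 := max (t - ε/2) ((x1 + t)/2) with hp0
    have hp0t : p0 < t := max_lt (by linarith) (by linarith)
    have hx1p0 : x1 ≤ p0 := le_trans (by linarith) (le_max_right _ _)
    have hd0 : ∀ z ∈ Ioo p0 t, deriv h z ≠ 0 := by
      intro z hz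
      refine hball z (ne_of_lt hz.2) ?_
      have : t - ε/2 < z := lt_of_le_of_lt (le_max_left _ _) hz.1
      rw [abs_sub_lt_iff]; constructor <;> linarith [hz.2]
    have hp0pos : c < h p0 := hpos p0 ⟨hx1p0, hp0t⟩
    refine ⟨h p0, hp0pos, p0, t, hp0t, hd0, ?_⟩
    rw [hht, uIcc_comm, uIcc_of_le hp0pos.le]

lemma esc (hsm : ContDiff ℝ (⊤:ℕ∞) h) (hnf : NowhereFlat h)
    (hsurj : Function.Surjective h) (L : ℝ) :
    ∃ c₀, c₀ < L ∧ ∀ c, c₀ < c → c < L → ∃ d, L ≤ d ∧ Good h c d := by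
  obtain ⟨a, ha⟩ := hsurj (L - 1)
  obtain ⟨b, hb⟩ := hsurj (L + 1)
  have hab : a ≠ b := fun he => by rw [he, hb] at ha; linarith
  rcases hab.lt_or_gt with hlt | hgt
  · -- a < b : w = sup of points in [a,b] with h < L
    set S := {x | x ∈ Icc a b ∧ h x < L} with hS
    have hane : a ∈ S := ⟨⟨le_refl a, hlt.le⟩, by rw [ha]; linarith⟩
    have hSne : S.Nonempty := ⟨a, hane⟩
    have hSbdd : BddAbove S := ⟨b, fun x hx => hx.1.2⟩
    set w := sSup S with hw
    have haw : a ≤ w := le_csSup hSbdd hane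
    have hwb : w ≤ b := csSup_le hSne (fun x hx => hx.1.2)
    have hwle : h w ≤ L := by
      have h1 : closure S ⊆ h ⁻¹' (Iic L) := by
        apply IsClosed.closure_subset_iff (IsClosed.preimage hsm.continuous isClosed_Iic) |>.mpr
        exact fun x hx => hx.2.le
      exact h1 (csSup_mem_closure hSne hSbdd)
    have hwb' : w < b := lt_of_le_of_ne hwb (fun he => by rw [he, hb] at hwle; linarith)
    have hwL : h w = L := by
      by_contra hne
      have hlt' : h w < L := lt_of_le_of_ne hwle hne
      obtain ⟨δ, hδ, hball⟩ := Metric.mem_nhds_iff.mp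
        ((isOpen_lt hsm.continuous continuous_const).mem_nhds (show h w < L from hlt'))
      set x := min ((w + b)/2) (w + δ/2) with hx
      have hwx : w < x := lt_min (by linarith) (by linarith)
      have hxb : x ≤ b := le_trans (min_le_left _ _) (by linarith)
      have hxS : x ∈ S := by
        refine ⟨⟨haw.trans hwx.le, hxb⟩, ?_⟩
        have : |x - w| < δ := by
          rw [abs_sub_lt_iff]
          constructor <;> [linarith [min_le_right ((w + b)/2) (w + δ/2)]; linarith]
        exact hball (by simpa [Real.dist_eq, Metric.mem_ball] using this)
      linarith [le_csSup hSbdd hxS]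
    have hge : ∀ y ∈ Ioc w b, L ≤ h y := by
      intro y hy
      by_contra hc
      have : y ∈ S := ⟨⟨haw.trans hy.1.le, hy.2⟩, not_le.mp hc⟩
      linarith [le_csSup hSbdd this, hy.1]
    have hUacc : ∀ δ, 0 < δ → ∃ x, x ∈ Ioo (w - δ) w ∧ h x < L := by
      intro δ hδ
      obtain ⟨x, hxS, hgt⟩ := exists_lt_of_lt_csSup hSne (show w - δ < w by linarith)
      have hxw : x ≤ w := le_csSup hSbdd hxS
      have : x ≠ w := fun he => by
        have h2 := hxS.2; rw [he, hwL] at h2; linarith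
      exact ⟨x, ⟨hgt, lt_of_le_of_ne hxw this⟩, hxS.2⟩
    obtain ⟨ε1, hε1, hb1⟩ := punct_ball (keyD hsm hnf w)
    obtain ⟨ε2, hε2, hb2⟩ := punct_ball (keyL hsm hnf w L)
    obtain ⟨ε, hεpos, hεle1, hεle2⟩ : ∃ e, 0 < e ∧ e ≤ ε1 ∧ e ≤ ε2 :=
      ⟨min ε1 ε2, lt_min hε1 hε2, min_le_left _ _, min_le_right _ _⟩
    obtain ⟨p, hp⟩ : ∃ p : ℝ, p = w - ε/2 := ⟨_, rfl⟩
    have hpw : p < w := by rw [hp]; linarith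
    have hdL : ∀ z ∈ Ioo p w, deriv h z ≠ 0 := by
      intro z hz
      obtain ⟨h1, h2⟩ := hz
      refine hb1 z (ne_of_lt h2) ?_
      rw [abs_sub_lt_iff]
      constructor <;> linarith [hp]
    have hSM : StrictMonoOn h (Icc p w) := by
      rcases mono_or_anti hsm hpw hdL with hm | hm
      · exact hm
      · exfalso
        obtain ⟨x, hx, hxL⟩ := hUacc (ε/2) (by linarith)
        have hxmem : x ∈ Ioo p w := by rw [hp]; exact hx
        have : h w < h x := hm ⟨hxmem.1.le, hxmem.2.le⟩ ⟨hpw.le, le_refl w⟩ hxmem.2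
        rw [hwL] at this; linarith
    have hpL : h p < L := by
      have := hSM ⟨le_refl p, hpw.le⟩ ⟨hpw.le, le_refl w⟩ hpw
      rwa [hwL] at this
    obtain ⟨q, hwq, hqle, hqb⟩ : ∃ qq, w < qq ∧ qq ≤ w + ε/2 ∧ qq ≤ b :=
      ⟨min (w + ε/2) ((w + b)/2), lt_min (by linarith) (by linarith), min_le_left _ _,
        le_trans (min_le_right _ _) (by linarith)⟩
    have hqw : |q - w| < ε2 := by
      rw [abs_sub_lt_iff]; constructor <;> linarith
    have hLq : L < h q :=
      lt_of_le_of_ne (hge q ⟨hwq, hqb⟩) (Ne.symm (hb2 q (ne_of_gt hwq) hqw))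
    by_cases hw0 : deriv h w = 0
    · refine ⟨h p, hpL, fun c hc1 hc2 => ⟨L, le_refl L, hc2, p, w, hpw, hdL, ?_⟩⟩
      rw [hwL, uIcc_of_le hpL.le]
      exact fun x hx => ⟨hc1.le.trans hx.1, hx.2⟩
    · refine ⟨h p, hpL, fun c hc1 hc2 => ⟨h q, hLq.le, lt_trans hc2 hLq, p, q, hpw.trans hwq, ?_, ?_⟩⟩
      · intro z hz
        obtain ⟨h1, h2⟩ := hz
        by_cases hzw : z = w
        · rw [hzw]; exact hw0
        · refine hb1 z hzw ?_
          rw [abs_sub_lt_iff]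
          constructor <;> linarith [hp]
      · rw [uIcc_of_le (le_trans hpL.le hLq.le)]
        exact fun x hx => ⟨hc1.le.trans hx.1, hx.2⟩
  · -- b < a : mirror
    set S := {x | x ∈ Icc b a ∧ h x < L} with hS
    have hane : a ∈ S := ⟨⟨hgt.le, le_refl a⟩, by rw [ha]; linarith⟩
    have hSne : S.Nonempty := ⟨a, hane⟩
    have hSbdd : BddBelow S := ⟨b, fun x hx => hx.1.1⟩
    set w := sInf S with hw
    have hwa : w ≤ a := csInf_le hSbdd hane
    have hbw : b ≤ w := le_csInf hSne (fun x hx => hx.1.1)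
    have hwle : h w ≤ L := by
      have h1 : closure S ⊆ h ⁻¹' (Iic L) := by
        apply IsClosed.closure_subset_iff (IsClosed.preimage hsm.continuous isClosed_Iic) |>.mpr
        exact fun x hx => hx.2.le
      exact h1 (csInf_mem_closure hSne hSbdd)
    have hbw' : b < w := lt_of_le_of_ne hbw (fun he => by rw [← he, hb] at hwle; linarith)
    have hwL : h w = L := by
      by_contra hne
      have hlt' : h w < L := lt_of_le_of_ne hwle hne
      obtain ⟨δ, hδ, hball⟩ := Metric.mem_nhds_iff.mp
        ((isOpen_lt hsm.continuous continuous_const).mem_nhds (show h w < L from hlt'))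
      set x := max ((b + w)/2) (w - δ/2) with hx
      have hxw : x < w := max_lt (by linarith) (by linarith)
      have hbx : b ≤ x := le_trans (by linarith) (le_max_left _ _)
      have hxS : x ∈ S := by
        refine ⟨⟨hbx, hxw.le.trans hwa⟩, ?_⟩
        have : |x - w| < δ := by
          rw [abs_sub_lt_iff]
          constructor <;> [linarith; linarith [le_max_right ((b + w)/2) (w - δ/2)]]
        exact hball (by simpa [Real.dist_eq, Metric.mem_ball] using this)
      linarith [csInf_le hSbdd hxS]
    have hge : ∀ y ∈ Ico b w, L ≤ h y := by
      intro y hy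
      by_contra hc
      have : y ∈ S := ⟨⟨hy.1, hy.2.le.trans hwa⟩, not_le.mp hc⟩
      linarith [csInf_le hSbdd this, hy.2]
    have hUacc : ∀ δ, 0 < δ → ∃ x, x ∈ Ioo w (w + δ) ∧ h x < L := by
      intro δ hδ
      obtain ⟨x, hxS, hgt'⟩ := exists_lt_of_csInf_lt hSne (show sInf S < w + δ by rw [← hw]; linarith)
      have hxw : w ≤ x := csInf_le hSbdd hxS
      have : x ≠ w := fun he => by
        have h2 := hxS.2; rw [he, hwL] at h2; linarith
      exact ⟨x, ⟨lt_of_le_of_ne hxw (Ne.symm this), hgt'⟩, hxS.2⟩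
    obtain ⟨ε1, hε1, hb1⟩ := punct_ball (keyD hsm hnf w)
    obtain ⟨ε2, hε2, hb2⟩ := punct_ball (keyL hsm hnf w L)
    obtain ⟨ε, hεpos, hεle1, hεle2⟩ : ∃ e, 0 < e ∧ e ≤ ε1 ∧ e ≤ ε2 :=
      ⟨min ε1 ε2, lt_min hε1 hε2, min_le_left _ _, min_le_right _ _⟩
    obtain ⟨p, hp⟩ : ∃ p : ℝ, p = w + ε/2 := ⟨_, rfl⟩
    have hwp : w < p := by rw [hp]; linarith
    have hdL : ∀ z ∈ Ioo w p, deriv h z ≠ 0 := by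
      intro z hz
      obtain ⟨h1, h2⟩ := hz
      refine hb1 z (ne_of_gt h1) ?_
      rw [abs_sub_lt_iff]
      constructor <;> linarith [hp]
    have hSA : StrictAntiOn h (Icc w p) := by
      rcases mono_or_anti hsm hwp hdL with hm | hm
      · exfalso
        obtain ⟨x, hx, hxL⟩ := hUacc (ε/2) (by linarith)
        have hxmem : x ∈ Ioo w p := by rw [hp]; exact hx
        have : h w < h x := hm ⟨le_refl w, hwp.le⟩ ⟨hxmem.1.le, hxmem.2.le⟩ hxmem.1
        rw [hwL] at this; linarith
      · exact hm
    have hpL : h p < L := by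
      have := hSA ⟨le_refl w, hwp.le⟩ ⟨hwp.le, le_refl p⟩ hwp
      rwa [hwL] at this
    obtain ⟨q, hqw', hqle, hbq⟩ : ∃ qq, qq < w ∧ w - ε/2 ≤ qq ∧ b ≤ qq :=
      ⟨max (w - ε/2) ((b + w)/2), max_lt (by linarith) (by linarith), le_max_left _ _,
        le_trans (by linarith) (le_max_right _ _)⟩
    have hqw : |q - w| < ε2 := by
      rw [abs_sub_lt_iff]; constructor <;> linarith
    have hLq : L < h q :=
      lt_of_le_of_ne (hge q ⟨hbq, hqw'⟩) (Ne.symm (hb2 q (ne_of_lt hqw') hqw))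
    by_cases hw0 : deriv h w = 0
    · refine ⟨h p, hpL, fun c hc1 hc2 => ⟨L, le_refl L, hc2, w, p, hwp, hdL, ?_⟩⟩
      rw [hwL, uIcc_comm, uIcc_of_le hpL.le]
      exact fun x hx => ⟨hc1.le.trans hx.1, hx.2⟩
    · refine ⟨h p, hpL, fun c hc1 hc2 => ⟨h q, hLq.le, lt_trans hc2 hLq, q, p, hqw'.trans hwp, ?_, ?_⟩⟩
      · intro z hz
        obtain ⟨h1, h2⟩ := hz
        by_cases hzw : z = w
        · rw [hzw]; exact hw0
        · refine hb1 z hzw ?_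
          rw [abs_sub_lt_iff]
          constructor <;> linarith [hp]
      · rw [uIcc_comm, uIcc_of_le (le_trans hpL.le hLq.le)]
        exact fun x hx => ⟨hc1.le.trans hx.1, hx.2⟩

lemma step_choice (hsm : ContDiff ℝ (⊤:ℕ∞) h) (hnf : NowhereFlat h)
    (hsurj : Function.Surjective h) (c : ℝ) :
    ∃ d, Good h c d ∧
      ((∃ m, Good h c m ∧ ∀ e, Good h c e → e ≤ m) → (∀ e, Good h c e → e ≤ d)) ∧
      (BddAbove {e | Good h c e} → min (c+1) ((sSup {e | Good h c e} + c)/2) ≤ d) ∧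
      (¬ BddAbove {e | Good h c e} → c + 1 ≤ d) := by
  classical
  obtain ⟨d0, hd0⟩ := step_up hsm hnf hsurj c
  have hne : {e | Good h c e}.Nonempty := ⟨d0, hd0⟩
  by_cases hmax : ∃ m, Good h c m ∧ ∀ e, Good h c e → e ≤ m
  · obtain ⟨m, hm, hmb⟩ := hmax
    have hbdd : BddAbove {e | Good h c e} := ⟨m, fun e he => hmb e he⟩
    refine ⟨m, hm, fun _ => hmb, fun _ => ?_, fun hnb => absurd hbdd hnb⟩
    have h1 : c < m := hm.1
    have h2 : sSup {e | Good h c e} ≤ m := csSup_le hne hmb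
    calc min (c+1) ((sSup {e | Good h c e} + c)/2) ≤ (sSup {e | Good h c e} + c)/2 :=
          min_le_right _ _
      _ ≤ m := by linarith
  · by_cases hbdd : BddAbove {e | Good h c e}
    · have hcσ : c < sSup {e | Good h c e} := lt_of_lt_of_le hd0.1 (le_csSup hbdd hd0)
      obtain ⟨e, heS, he⟩ := exists_lt_of_lt_csSup hne
        (show (sSup {e | Good h c e} + c)/2 < sSup {e | Good h c e} by linarith)
      exact ⟨e, heS, fun hm => absurd hm hmax, fun _ => le_trans (min_le_right _ _) he.le,
        fun hnb => absurd hbdd hnb⟩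
    · obtain ⟨e, heS, he⟩ := not_bddAbove_iff.mp hbdd (c + 1)
      exact ⟨e, heS, fun hm => absurd hm hmax, fun hb => absurd hb hbdd, fun _ => he.le⟩

lemma chain (hsm : ContDiff ℝ (⊤:ℕ∞) h) (hnf : NowhereFlat h)
    (hsurj : Function.Surjective h) :
    ∃ u : ℕ → ℝ, u 0 = 0 ∧ StrictMono u ∧ (∀ n, Good h (u n) (u (n+1))) ∧
      Tendsto u atTop atTop := by
  classical
  choose F hFg hFmax hFbdd hFnbdd using step_choice hsm hnf hsurj
  set u : ℕ → ℝ := fun n => F^[n] 0 with hu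
  have hsucc : ∀ n, u (n+1) = F (u n) := fun n => Function.iterate_succ_apply' F n 0
  have hgood : ∀ n, Good h (u n) (u (n+1)) := fun n => by rw [hsucc]; exact hFg (u n)
  have hmono : StrictMono u := strictMono_nat_of_lt_succ (fun n => (hgood n).1)
  refine ⟨u, rfl, hmono, hgood, ?_⟩
  by_contra hnt
  have hbdd : BddAbove (range u) := by
    by_contra hb
    exact hnt (tendsto_atTop_atTop_of_monotone hmono.monotone (fun M => by
      rcases not_bddAbove_iff.mp hb M with ⟨y, ⟨n, rfl⟩, hy⟩
      exact ⟨n, hy.le⟩))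
  set L := ⨆ n, u n with hL
  have hconv : Tendsto u atTop (𝓝 L) := tendsto_atTop_ciSup hmono.monotone hbdd
  have hult : ∀ n, u n < L :=
    fun n => lt_of_lt_of_le (hmono (Nat.lt_succ_self n)) (le_ciSup hbdd (n+1))
  obtain ⟨c₀, hc₀L, hesc⟩ := esc hsm hnf hsurj L
  obtain ⟨N, hN⟩ := Filter.eventually_atTop.mp (hconv.eventually (eventually_gt_nhds hc₀L))
  have hd : ∀ n, N ≤ n → ∃ d, L ≤ d ∧ Good h (u n) d :=
    fun n hn => hesc (u n) (hN n hn) (hult n)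
  have hnomax : ∀ n, N ≤ n → ¬ (∃ m, Good h (u n) m ∧ ∀ e, Good h (u n) e → e ≤ m) := by
    intro n hn hmax
    obtain ⟨d, hLd, hdg⟩ := hd n hn
    have h1 : ∀ e, Good h (u n) e → e ≤ u (n+1) := by
      have := hFmax (u n) hmax
      rw [← hsucc] at this
      exact this
    exact absurd (lt_of_lt_of_le (hult (n+1)) (le_trans hLd (h1 d hdg))) (lt_irrefl _)
  by_cases hA : ∃ n, N ≤ n ∧ ¬ BddAbove {e | Good h (u n) e}
  · obtain ⟨n, hn, hnb⟩ := hA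
    have hstep : ∀ k : ℕ, ¬ BddAbove {e | Good h (u (n+k)) e} ∧ u n + k ≤ u (n+k) := by
      intro k
      induction k with
      | zero => simpa using hnb
      | succ k ih =>
        obtain ⟨ih1, ih2⟩ := ih
        have hnb' : ¬ BddAbove {e | Good h (u (n+k+1)) e} := by
          intro hb
          apply ih1
          obtain ⟨M, hM⟩ := hb
          refine ⟨max M (u (n+k+1)), fun e he => ?_⟩
          rcases le_or_gt e (u (n+k+1)) with h1 | h1
          · exact le_trans h1 (le_max_right _ _)
          · exact le_trans (hM (good_mono he (hgood (n+k)).1 h1)) (le_max_left _ _)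
        have hge : u (n+k) + 1 ≤ u (n+k+1) := by
          have := hFnbdd (u (n+k)) ih1
          rw [← hsucc] at this
          exact this
        constructor
        · exact hnb'
        · have heq : n + (k+1) = n + k + 1 := by omega
          rw [heq]
          push_cast
          linarith
    obtain ⟨k, hk⟩ := exists_nat_gt (L - (u n))
    have := (hstep k).2
    linarith [hult (n+k)]
  · push_neg at hA
    by_cases hB2 : ∃ n, N ≤ n ∧ L < sSup {e | Good h (u n) e}
    · obtain ⟨n₁, hn₁, hσ₁⟩ := hB2
      set σ₁ := sSup {e | Good h (u n₁) e} with hσ₁def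
      have happrox : ∀ k : ℕ, ∀ y, y < σ₁ → ∃ e, Good h (u (n₁+k)) e ∧ y < e := by
        intro k
        induction k with
        | zero =>
          intro y hy
          have hne : {e | Good h (u n₁) e}.Nonempty := ⟨_, hgood n₁⟩
          obtain ⟨e, he, hye⟩ := exists_lt_of_lt_csSup hne hy
          exact ⟨e, he, hye⟩
        | succ k ih =>
          intro y hy
          have hu1 : u (n₁+k+1) < σ₁ := lt_trans (hult _) hσ₁
          obtain ⟨e, he, hye⟩ := ih (max y (u (n₁+k+1))) (max_lt hy hu1)
          exact ⟨e, good_mono he (hgood (n₁+k)).1 (lt_of_le_of_lt (le_max_right _ _) hye),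
            lt_of_le_of_lt (le_max_left _ _) hye⟩
      have hσmono : ∀ k : ℕ, σ₁ ≤ sSup {e | Good h (u (n₁+k)) e} := by
        intro k
        apply le_of_forall_lt
        intro y hy
        obtain ⟨e, he, hye⟩ := happrox k y hy
        exact lt_of_lt_of_le hye (le_csSup (hA (n₁+k) (le_trans hn₁ (Nat.le_add_right _ _))) he)
      -- find m with u m close to L
      set δ := σ₁ - L with hδ
      have hδpos : 0 < δ := by rw [hδ]; linarith
      have hev : ∀ᶠ m in atTop, L - min δ 1 < u m :=
        hconv.eventually (eventually_gt_nhds (by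
          have : 0 < min δ 1 := lt_min hδpos one_pos
          linarith))
      obtain ⟨M₀, hM₀⟩ := Filter.eventually_atTop.mp hev
      set m := max M₀ n₁ with hm
      have hum : L - min δ 1 < u (m) := hM₀ m (le_max_left _ _)
      obtain ⟨k, hk⟩ : ∃ k : ℕ, m = n₁ + k := ⟨m - n₁, by omega⟩
      have hσm : σ₁ ≤ sSup {e | Good h (u m) e} := by rw [hk]; exact hσmono k
      have hbound : min (u m + 1) ((sSup {e | Good h (u m) e} + u m)/2) ≤ u (m+1) := by
        have := hFbdd (u m) (hA m (le_trans hn₁ (le_max_right _ _)))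
        rw [← hsucc] at this
        exact this
      have h1 : L < u m + 1 := by
        have : min δ 1 ≤ 1 := min_le_right _ _
        linarith
      have h2 : L < (sSup {e | Good h (u m) e} + u m)/2 := by
        have h3 : min δ 1 ≤ δ := min_le_left _ _
        have h4 : L + δ ≤ sSup {e | Good h (u m) e} := by rw [hδ] at *; linarith [hσm]
        linarith
      have : L < u (m+1) := lt_of_lt_of_le (lt_min h1 h2) hbound
      linarith [hult (m+1)]
    · push_neg at hB2
      obtain ⟨d, hLd, hdg⟩ := hd N (le_refl N)
      have hbddN : BddAbove {e | Good h (u N) e} := hA N (le_refl N)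
      have hdσ : d ≤ sSup {e | Good h (u N) e} := le_csSup hbddN hdg
      have hσL : sSup {e | Good h (u N) e} ≤ L := hB2 N (le_refl N)
      have hdL : d = L := le_antisymm (le_trans hdσ hσL) hLd
      apply hnomax N (le_refl N)
      refine ⟨d, hdg, fun e he => ?_⟩
      calc e ≤ sSup {e | Good h (u N) e} := le_csSup hbddN he
        _ ≤ L := hσL
        _ = d := hdL.symm

/-- smooth continuous section over a Good interval -/
lemma sec (hsm : ContDiff ℝ (⊤:ℕ∞) h) {c d : ℝ} (g : Good h c d) :
    ∃ s : ℝ → ℝ, (∀ x ∈ Icc c d, h (s x) = x) ∧ ContinuousOn s (Icc c d) ∧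
      ContDiffOn ℝ (⊤:ℕ∞) s (Ioo c d) := by
  classical
  obtain ⟨hcd, p, q, hpq, hd0, hsub⟩ := g
  have himg : Icc c d ⊆ h '' Icc p q := by
    intro x hx
    have h1 : x ∈ uIcc (h p) (h q) := hsub hx
    have h2 := intermediate_value_uIcc (hsm.continuous.continuousOn (s := uIcc p q)) h1
    rwa [uIcc_of_le hpq.le] at h2
  have inj : InjOn h (Icc p q) := by
    rcases mono_or_anti hsm hpq hd0 with hm | hm
    · exact hm.injOn
    · exact hm.injOn
  set s : ℝ → ℝ := Function.invFunOn h (Icc p q) with hs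
  have hsx : ∀ x ∈ Icc c d, h (s x) = x ∧ s x ∈ Icc p q := by
    intro x hx
    have hmem : ∃ a ∈ Icc p q, h a = x := by
      rcases himg hx with ⟨a, ha, he⟩; exact ⟨a, ha, he⟩
    exact ⟨Function.invFunOn_eq hmem, Function.invFunOn_mem hmem⟩
  refine ⟨s, fun x hx => (hsx x hx).1, ?_, ?_⟩
  · -- continuity
    let E : Icc p q ≃ (h '' Icc p q : Set ℝ) := Equiv.Set.imageOfInjOn h (Icc p q) inj
    have hEc : Continuous E := by
      apply Continuous.subtype_mk
      exact hsm.continuous.comp continuous_subtype_val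
    let Φ := hEc.homeoOfEquivCompactToT2 (Y := (h '' Icc p q : Set ℝ))
    rw [continuousOn_iff_continuous_restrict]
    have hre : restrict (Icc c d) s =
        Subtype.val ∘ Φ.symm ∘ (fun x : Icc c d => (⟨x.1, himg x.2⟩ : (h '' Icc p q : Set ℝ))) := by
      funext x
      have h1 := (hsx x.1 x.2).1
      have h2 := (hsx x.1 x.2).2
      have h3 : h ((Φ.symm ⟨x.1, himg x.2⟩ : Icc p q) : ℝ) = x.1 := by
        have := Φ.apply_symm_apply ⟨x.1, himg x.2⟩
        exact congrArg Subtype.val this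
      have h4 : ((Φ.symm ⟨x.1, himg x.2⟩ : Icc p q) : ℝ) ∈ Icc p q := (Φ.symm _).2
      exact inj h2 h4 (h1.trans h3.symm)
    change Continuous (restrict (Icc c d) s)
    rw [hre]
    exact continuous_subtype_val.comp (Φ.symm.continuous.comp
      (Continuous.subtype_mk continuous_subtype_val _))
  · -- smoothness
    intro x₀ hx₀
    have hx₀' : x₀ ∈ Icc c d := Ioo_subset_Icc_self hx₀
    have h1 := (hsx x₀ hx₀').1
    have h2 := (hsx x₀ hx₀').2
    have hsIoo : s x₀ ∈ Ioo p q := by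
      constructor
      · refine lt_of_le_of_ne h2.1 (fun he => ?_)
        have hpx : h p = x₀ := by rw [he]; exact h1
        rcases le_total (h p) (h q) with hle | hle
        · have hI := hsub ⟨le_refl c, hcd.le⟩
          rw [uIcc_of_le hle] at hI
          linarith [hx₀.1, hI.1, hpx.le, hpx.ge]
        · have hI := hsub ⟨hcd.le, le_refl d⟩
          rw [uIcc_comm, uIcc_of_le hle] at hI
          linarith [hx₀.2, hI.2, hpx.le, hpx.ge]
      · refine lt_of_le_of_ne h2.2 (fun he => ?_)
        have hqx : h q = x₀ := by rw [← he]; exact h1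
        rcases le_total (h p) (h q) with hle | hle
        · have hI := hsub ⟨hcd.le, le_refl d⟩
          rw [uIcc_of_le hle] at hI
          linarith [hx₀.2, hI.2, hqx.le, hqx.ge]
        · have hI := hsub ⟨le_refl c, hcd.le⟩
          rw [uIcc_comm, uIcc_of_le hle] at hI
          linarith [hx₀.1, hI.1, hqx.le, hqx.ge]
    have hne : deriv h (s x₀) ≠ 0 := hd0 _ hsIoo
    set a := s x₀ with ha
    set f' : ℝ ≃L[ℝ] ℝ := ContinuousLinearEquiv.unitsEquivAut ℝ (Units.mk0 (deriv h a) hne) with hf'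
    have hder : HasFDerivAt h (f' : ℝ →L[ℝ] ℝ) a :=
      ((hsm.differentiable (by norm_num)) a).hasDerivAt.hasFDerivAt
    have hcda : ContDiffAt ℝ (⊤:ℕ∞) h a := hsm.contDiffAt
    have hloc : ContDiffAt ℝ (⊤:ℕ∞) (hcda.localInverse hder (by norm_num)) (h a) :=
      hcda.to_localInverse hder (by norm_num)
    have hstrict := hcda.hasStrictFDerivAt' hder (by norm_num)
    have hevr : ∀ᶠ y in 𝓝 (h a), h (hstrict.localInverse h f' a y) = y :=
      hstrict.eventually_right_inverse
    have hcont : ContinuousAt (hstrict.localInverse h f' a) (h a) :=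
      hstrict.localInverse_continuousAt
    have hfix : hstrict.localInverse h f' a (h a) = a := hstrict.localInverse_apply_image
    have hevm : ∀ᶠ y in 𝓝 (h a), hstrict.localInverse h f' a y ∈ Ioo p q := by
      have : Ioo p q ∈ 𝓝 a := (isOpen_Ioo).mem_nhds hsIoo
      have h6 := hcont.preimage_mem_nhds (hfix ▸ this)
      filter_upwards [h6] with y hy using hy
    have heq : s =ᶠ[𝓝 x₀] hstrict.localInverse h f' a := by
      rw [h1] at hevr hevm
      filter_upwards [hevr, hevm, (isOpen_Ioo).eventually_mem hx₀] with y hy1 hy2 hy3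
      have hy4 : y ∈ Icc c d := Ioo_subset_Icc_self hy3
      exact inj (hsx y hy4).2 (Ioo_subset_Icc_self hy2) (((hsx y hy4).1).trans hy1.symm)
    have hCA : ContDiffAt ℝ (⊤:ℕ∞) s x₀ := by
      have : ContDiffAt ℝ (⊤:ℕ∞) (hstrict.localInverse h f' a) x₀ := by
        rw [← h1]
        exact hloc
      exact this.congr_of_eventuallyEq heq
    exact hCA.contDiffWithinAt

lemma good_of_neg {a b : ℝ} (hg : Good (fun x => -(h x)) a b) : Good h (-b) (-a) := by
  obtain ⟨hab, p, q, hpq, hd, hsub⟩ := hg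
  refine ⟨by linarith, p, q, hpq, ?_, ?_⟩
  · intro t ht
    have h1 := hd t ht
    rw [deriv.fun_neg] at h1
    exact fun hc => h1 (by rw [hc, neg_zero])
  · intro x hx
    have hmem : -x ∈ Icc a b := ⟨by linarith [hx.2], by linarith [hx.1]⟩
    have h2 := hsub hmem
    rw [Set.mem_uIcc] at h2 ⊢
    rcases h2 with ⟨h3, h4⟩ | ⟨h3, h4⟩
    · have h3' : -(h p) ≤ -x := h3
      have h4' : -x ≤ -(h q) := h4
      right; constructor <;> linarith
    · have h3' : -(h q) ≤ -x := h3
      have h4' : -x ≤ -(h p) := h4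
      left; constructor <;> linarith

lemma nf_neg (hnf : NowhereFlat h) : NowhereFlat (fun x => -(h x)) := by
  obtain ⟨r, hr, hx⟩ := hnf
  refine ⟨r, hr, fun x => ?_⟩
  obtain ⟨r', h1, h2, h3⟩ := hx x
  refine ⟨r', h1, h2, ?_⟩
  rw [iteratedDeriv_fun_neg]
  exact neg_ne_zero.2 h3

lemma zchain (hsm : ContDiff ℝ (⊤:ℕ∞) h) (hnf : NowhereFlat h)
    (hsurj : Function.Surjective h) :
    ∃ y : ℤ → ℝ, StrictMono y ∧ (∀ k : ℤ, Good h (y k) (y (k+1))) ∧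
      (∀ x : ℝ, ∃ k : ℤ, x < y k) ∧ (∀ x : ℝ, ∃ k : ℤ, y k < x) := by
  classical
  obtain ⟨u, hu0, humono, hugood, hutend⟩ := chain hsm hnf hsurj
  have hsm' : ContDiff ℝ (⊤:ℕ∞) (fun x => -(h x)) := hsm.neg
  have hsurj' : Function.Surjective (fun x => -(h x)) := by
    intro b
    obtain ⟨x, hx⟩ := hsurj (-b)
    exact ⟨x, by simp [hx]⟩
  obtain ⟨v, hv0, hvmono, hvgood, hvtend⟩ := chain hsm' (nf_neg hnf) hsurj'
  set y : ℤ → ℝ := fun k => if 0 ≤ k then u k.toNat else -(v (-k).toNat) with hy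
  have hyn : ∀ n : ℕ, y (n:ℤ) = u n := by
    intro n
    simp [hy]
  have hyneg : ∀ n : ℕ, 0 < n → y (-(n:ℤ)) = -(v n) := by
    intro n hn
    simp only [hy]
    rw [if_neg (by omega)]
    simp
  have hgood : ∀ k : ℤ, Good h (y k) (y (k+1)) := by
    intro k
    rcases le_or_gt 0 k with hk | hk
    · have h1 : y k = u k.toNat := by
        have := hyn k.toNat
        rwa [Int.toNat_of_nonneg hk] at this
      have h2 : y (k+1) = u (k.toNat + 1) := by
        have := hyn (k.toNat + 1)
        rwa [show ((k.toNat + 1 : ℕ) : ℤ) = k + 1 by omega] at this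
      rw [h1, h2]
      exact hugood k.toNat
    · set n := (-k).toNat with hn
      have hn1 : 1 ≤ n := by omega
      have h1 : y k = -(v n) := by
        have := hyneg n (by omega)
        rwa [show -(n:ℤ) = k by omega] at this
      rcases eq_or_lt_of_le hn1 with he | hlt
      · -- k = -1
        have hk1 : k + 1 = 0 := by omega
        have h2 : y (k+1) = 0 := by rw [hk1]; have := hyn 0; simpa [hu0] using this
        have h3 := good_of_neg (hvgood 0)
        rw [hv0, neg_zero] at h3
        rw [h1, h2, ← he]
        exact h3
      · -- k ≤ -2
        have h2 : y (k+1) = -(v (n-1)) := by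
          have := hyneg (n-1) (by omega)
          rwa [show -((n-1:ℕ):ℤ) = k + 1 by omega] at this
        have h3 := good_of_neg (hvgood (n-1))
        rw [show n - 1 + 1 = n by omega] at h3
        rw [h1, h2]
        exact h3
  refine ⟨y, strictMono_int_of_lt_succ (fun k => (hgood k).1), hgood, ?_, ?_⟩
  · intro x
    obtain ⟨n, hn⟩ := (hutend.eventually (eventually_gt_atTop x)).exists
    exact ⟨(n:ℤ), by rw [hyn]; exact hn⟩
  · intro x
    obtain ⟨n, hn⟩ := (hvtend.eventually (eventually_gt_atTop (-x))).exists
    refine ⟨-(((max n 1):ℕ):ℤ), ?_⟩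
    rw [hyneg _ (by omega)]
    have := hvmono.monotone (le_max_left n 1)
    linarith

theorem stmt_11' (hsm : ContDiff ℝ (⊤ : ℕ∞) h) (hnf : NowhereFlat h)
    (hsurj : Function.Surjective h) :
    ∃ hs : ℝ → ℝ, PiecewiseSmooth hs ∧ ∀ x : ℝ, h (hs x) = x := by
  classical
  obtain ⟨y, hymono, hygood, hyub, hylb⟩ := zchain hsm hnf hsurj
  choose sfun hsec1 hsec2 hsec3 using fun k : ℤ => sec hsm (hygood k)
  have hK : ∀ x : ℝ, ∃ k : ℤ, y k ≤ x ∧ x < y (k+1) := by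
    intro x
    obtain ⟨k₀, hk₀⟩ := hyub x
    obtain ⟨k₁, hk₁⟩ := hylb x
    have hBdd : ∃ b : ℤ, ∀ z ∈ {k : ℤ | y k ≤ x}, z ≤ b := by
      refine ⟨k₀, fun z hz => ?_⟩
      by_contra hc
      have : y k₀ ≤ y z := hymono.monotone (by omega)
      exact absurd (le_trans this hz) (not_le.mpr hk₀)
    obtain ⟨K, hK1, hK2⟩ := Int.exists_greatest_of_bdd hBdd ⟨k₁, hk₁.le⟩
    refine ⟨K, hK1, ?_⟩
    by_contra hc
    have : K + 1 ≤ K := hK2 (K+1) (not_lt.mp hc)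
    omega
  choose K hK1 hK2 using hK
  have hKuniq : ∀ (x : ℝ) (k : ℤ), y k ≤ x → x < y (k+1) → K x = k := by
    intro x k h1 h2
    by_contra hc
    rcases lt_or_gt_of_ne hc with hlt | hgt
    · have : y (K x + 1) ≤ y k := hymono.monotone (by omega)
      linarith [hK2 x]
    · have : y (k + 1) ≤ y (K x) := hymono.monotone (by omega)
      linarith [hK1 x]
  set hs : ℝ → ℝ := fun x => sfun (K x) x with hhs
  have hinv : ∀ x : ℝ, h (hs x) = x := by
    intro x
    exact hsec1 (K x) x ⟨hK1 x, (hK2 x).le⟩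
  have hIooY : ∀ (k j : ℤ), y j ∈ Ioo (y k) (y (k+1)) → False := by
    intro k j hj
    have h1 : k < j := hymono.lt_iff_lt.mp hj.1
    have h2 : j < k + 1 := hymono.lt_iff_lt.mp hj.2
    omega
  have hIoosub : ∀ k : ℤ, Ioo (y k) (y (k+1)) ⊆ (range y)ᶜ := by
    intro k t ht hmem
    obtain ⟨j, rfl⟩ := hmem
    exact hIooY k j ht
  have hyKlt : ∀ x ∈ (range y)ᶜ, y (K x) < x := by
    intro x hx
    refine lt_of_le_of_ne (hK1 x) (fun he => hx ⟨K x, he⟩)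
  have hclosed : IsClosed (range y) := by
    rw [← isOpen_compl_iff]
    rw [isOpen_iff_mem_nhds]
    intro x hx
    have : Ioo (y (K x)) (y (K x + 1)) ∈ 𝓝 x := (isOpen_Ioo).mem_nhds ⟨hyKlt x hx, hK2 x⟩
    exact Filter.mem_of_superset this (hIoosub (K x))
  have hdisc : DiscreteTopology (range y) := by
    rw [discreteTopology_subtype_iff]
    rintro x ⟨k, rfl⟩
    rw [inf_principal_eq_bot]
    have hmem : Ioo (y (k-1)) (y (k+1)) ∈ 𝓝 (y k) :=
      (isOpen_Ioo).mem_nhds ⟨hymono (by omega), hymono (by omega)⟩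
    filter_upwards [mem_nhdsWithin_of_mem_nhds hmem, self_mem_nhdsWithin] with t h1 h2
    rintro ⟨j, rfl⟩
    have ha : k - 1 < j := hymono.lt_iff_lt.mp h1.1
    have hb : j < k + 1 := hymono.lt_iff_lt.mp h1.2
    have : j = k := by omega
    rw [this] at h2
    exact h2 rfl
  have hcomp : ∀ x ∈ (range y)ᶜ,
      connectedComponentIn (range y)ᶜ x = Ioo (y (K x)) (y (K x + 1)) := by
    intro x hx
    apply Subset.antisymm
    · intro z hz
      have hCsub : connectedComponentIn (range y)ᶜ x ⊆ (range y)ᶜ :=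
        connectedComponentIn_subset _ _
      have hCconn : IsPreconnected (connectedComponentIn (range y)ᶜ x) :=
        (isConnected_connectedComponentIn_iff.mpr hx).isPreconnected
      have hCord : OrdConnected (connectedComponentIn (range y)ᶜ x) := hCconn.ordConnected
      have hxC : x ∈ connectedComponentIn (range y)ᶜ x := mem_connectedComponentIn hx
      constructor
      · by_contra hc
        have h1 : y (K x) ∈ Icc z x := ⟨not_lt.mp hc, hK1 x⟩
        exact hCsub (hCord.out hz hxC h1) (mem_range_self _)
      · by_contra hc
        have h1 : y (K x + 1) ∈ Icc x z := ⟨(hK2 x).le, not_lt.mp hc⟩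
        exact hCsub (hCord.out hxC hz h1) (mem_range_self _)
    · exact isPreconnected_Ioo.subset_connectedComponentIn
        ⟨hyKlt x hx, hK2 x⟩ (hIoosub (K x))
  have hKeq : ∀ (k : ℤ) (t : ℝ), t ∈ Ioo (y k) (y (k+1)) → K t = k :=
    fun k t ht => hKuniq t k ht.1.le ht.2
  refine ⟨hs, ⟨range y, hclosed, hdisc, ?_⟩, hinv⟩
  intro x hx
  rw [hcomp x hx]
  constructor
  · exact (hsec3 (K x)).congr
      (fun t ht => by show sfun (K t) t = sfun (K x) t; rw [hKeq (K x) t ht])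
  · refine ⟨sfun (K x), ?_, ?_⟩
    · rw [closure_Ioo (ne_of_lt (hymono (by omega : (K x) < K x + 1)))]
      exact hsec2 (K x)
    · intro t ht
      show sfun (K x) t = sfun (K t) t
      rw [hKeq (K x) t ht]

end main

/-- Lemma 3.5. A smooth, nowhere flat, surjective `h : ℝ → ℝ` admits
a piecewise smooth right inverse. -/
theorem stmt_11 (h : ℝ → ℝ) (hsm : ContDiff ℝ (⊤ : ℕ∞) h) (hnf : NowhereFlat h)
    (hsurj : Function.Surjective h) :
    ∃ hs : ℝ → ℝ, PiecewiseSmooth hs ∧ ∀ x : ℝ, h (hs x) = x :=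
  stmt_11' hsm hnf hsurj
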